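/- arXiv:1910.11823 — 2 statements merged into one kernel-verified Lean document; each statement's English description precedes it below -/
import Mathlib

section
/- For every natural number n ≥ 1, the roots of the Fibonacci product polynomial Q_n are exactly the n distinct real numbers x_l = 4·cos²(πl/(2(n+1))) + 1 for l = 1, 2, ..., n. -/
open Polynomial

/-- Fibonacci product polynomials `Q` (over `ℝ`). -/
noncomputable def fibQ : ℕ → Polynomial ℝ
  | 0 => 1
  | 1 => X - 3
  | n + 2 => (X - 3) * fibQ (n + 1) - fibQ n

lemma fibQ_eval (θ : ℝ) : ∀ n : ℕ,
    (fibQ n).eval (3 + 2 * Real.cos θ) * Real.sin θ = Real.sin ((n + 1) * θ) := by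
  intro n
  induction n using Nat.strong_induction_on with
  | _ n ih =>
    match n with
    | 0 => simp [fibQ]
    | 1 =>
      simp [fibQ]
      norm_num [Real.sin_two_mul]; ring
    | n + 2 =>
      have h1 := ih (n + 1) (by omega)
      have h0 := ih n (by omega)
      have e2 : ((n:ℝ) + 2 + 1) * θ = ((n + 1 + 1) * θ) + θ := by ring
      have e0 : ((n:ℝ) + 1) * θ = ((n + 1 + 1) * θ) - θ := by ring
      simp only [fibQ, eval_sub, eval_mul, eval_X, eval_ofNat]
      push_cast at h1 h0 ⊢
      rw [e2, Real.sin_add]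
      rw [e0, Real.sin_sub] at h0
      linear_combination (2 * Real.cos θ) * h1 - h0

lemma fibQ_monic : ∀ n : ℕ, (fibQ n).Monic ∧ (fibQ n).natDegree = n := by
  have h3 : (3 : ℝ[X]) = C 3 := by rw [map_ofNat]
  intro n
  induction n using Nat.strong_induction_on with
  | _ n ih =>
    match n with
    | 0 => constructor <;> simp [fibQ, monic_one]
    | 1 => rw [show fibQ 1 = X - C 3 by rw [fibQ, h3]]
           exact ⟨monic_X_sub_C 3, natDegree_X_sub_C 3⟩
    | n + 2 =>
      have h1 := ih (n + 1) (by omega)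
      have h0 := ih n (by omega)
      have hm : ((X - 3) * fibQ (n + 1)).Monic := by
        rw [h3]; exact (monic_X_sub_C 3).mul h1.1
      have hd : ((X - 3) * fibQ (n + 1)).natDegree = n + 2 := by
        rw [h3, natDegree_mul (X_sub_C_ne_zero 3) h1.1.ne_zero,
          natDegree_X_sub_C, h1.2]
        omega
      have hlt : (fibQ n).degree < ((X - 3) * fibQ (n + 1)).degree := by
        rw [degree_eq_natDegree h0.1.ne_zero, degree_eq_natDegree hm.ne_zero,
          h0.2, hd]
        exact_mod_cast by omega
      refine ⟨hm.sub_of_left hlt, ?_⟩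
      show ((X - 3) * fibQ (n + 1) - fibQ n).natDegree = n + 2
      rw [natDegree_sub_eq_left_of_natDegree_lt (by rw [h0.2, hd]; omega), hd]

open Real in
theorem stmt8 (n : ℕ) (hn : 1 ≤ n) :
    (∀ x : ℝ, (fibQ n).IsRoot x ↔
      ∃ l ∈ Finset.Icc 1 n,
        x = 4 * Real.cos (Real.pi * l / (2 * (n + 1))) ^ 2 + 1) ∧
    Set.InjOn (fun l : ℕ => 4 * Real.cos (Real.pi * l / (2 * (n + 1))) ^ 2 + 1)
      (Finset.Icc 1 n) := by
  have hn1 : ((n : ℝ) + 1) ≠ 0 := by positivity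
  have hx : ∀ l : ℕ, 4 * Real.cos (π * l / (2 * (n + 1))) ^ 2 + 1
      = 3 + 2 * Real.cos (π * l / (n + 1)) := by
    intro l
    rw [Real.cos_sq]
    rw [show 2 * (π * l / (2 * ((n:ℝ) + 1))) = π * l / (n + 1) by
      field_simp]
    ring
  -- the angles
  set f : ℕ → ℝ := fun l => π * l / (n + 1) with hf
  have hmem : ∀ l : ℕ, l ∈ Finset.Icc 1 n → 0 < f l ∧ f l < π := by
    intro l hl
    rw [Finset.mem_Icc] at hl
    have h1 : (1 : ℝ) ≤ l := by exact_mod_cast hl.1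
    have h2 : (l : ℝ) ≤ n := by exact_mod_cast hl.2
    constructor
    · apply div_pos (by positivity) (by positivity)
    · rw [div_lt_iff₀ (by positivity)]
      nlinarith [Real.pi_pos]
  have hroot : ∀ l ∈ Finset.Icc 1 n, (fibQ n).IsRoot (3 + 2 * Real.cos (f l)) := by
    intro l hl
    have hs := (hmem l hl)
    have hsin : Real.sin (f l) ≠ 0 :=
      ne_of_gt (Real.sin_pos_of_pos_of_lt_pi hs.1 hs.2)
    have he := fibQ_eval (f l) n
    have : ((n : ℝ) + 1) * f l = l * π := by
      rw [hf]; field_simp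
    rw [this, Real.sin_nat_mul_pi] at he
    exact (mul_eq_zero.mp he).resolve_right hsin
  have hinj : Set.InjOn (fun l : ℕ => 3 + 2 * Real.cos (f l)) (Finset.Icc 1 n) := by
    intro a ha b hb hab
    simp only at hab
    have ha' := hmem a ha
    have hb' := hmem b hb
    have hcos : Real.cos (f a) = Real.cos (f b) := by linarith
    have : f a = f b := by
      apply Real.injOn_cos ⟨le_of_lt ha'.1, le_of_lt ha'.2⟩
        ⟨le_of_lt hb'.1, le_of_lt hb'.2⟩ hcos
    rw [hf] at this
    simp only [div_eq_div_iff hn1 hn1] at this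
    have := mul_right_cancel₀ hn1 this
    have := mul_left_cancel₀ (ne_of_gt Real.pi_pos) this
    exact_mod_cast this
  constructor
  · intro x
    constructor
    · intro hroot_x
      by_contra hc
      push_neg at hc
      -- counting argument
      have hne : fibQ n ≠ 0 := (fibQ_monic n).1.ne_zero
      set t : Finset ℝ := (Finset.Icc 1 n).image (fun l : ℕ => 3 + 2 * Real.cos (f l))
        with ht
      have hcard : t.card = n := by
        rw [ht, Finset.card_image_of_injOn hinj, Nat.card_Icc]; omega
      have hxt : x ∉ t := by
        intro hxt
        rw [ht, Finset.mem_image] at hxt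
        obtain ⟨l, hl, hlx⟩ := hxt
        exact hc l hl (by rw [hx l, hlx])
      have hsub : insert x t ⊆ (fibQ n).roots.toFinset := by
        intro y hy
        rw [Finset.mem_insert] at hy
        rw [Multiset.mem_toFinset, mem_roots']
        refine ⟨hne, ?_⟩
        rcases hy with rfl | hy
        · exact hroot_x
        · rw [ht, Finset.mem_image] at hy
          obtain ⟨l, hl, hly⟩ := hy
          rw [← hly]; exact hroot l hl
      have h1 : (insert x t).card = n + 1 := by
        rw [Finset.card_insert_of_notMem hxt, hcard]
      have h2 : (insert x t).card ≤ (fibQ n).roots.toFinset.card :=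
        Finset.card_le_card hsub
      have h3 : (fibQ n).roots.toFinset.card ≤ Multiset.card (fibQ n).roots :=
        Multiset.toFinset_card_le _
      have h4 : Multiset.card (fibQ n).roots ≤ n := by
        have := Polynomial.card_roots' (fibQ n)
        rwa [(fibQ_monic n).2] at this
      omega
    · rintro ⟨l, hl, rfl⟩
      rw [hx l]
      exact hroot l hl
  · intro a ha b hb hab
    simp only [hx] at hab
    exact hinj ha hb hab
end

section
/- Fix an integer sequence (e_k)_{k≥0} and let χ_{M_n} denote the characteristic polynomial of the n×n tridiagonal matrix M_n with diagonal (e_0,...,e_{n-1}) and sub/super-diagonals 1 (with χ_{M_0} = 1). Then for every n ≥ 0: χ_{M_n} = Q_n + Σ_{k=0}^{n-1} (3 - e_k)·χ_{M_k}·Q_{n-k-1}, where (Q_n) are the Fibonacci product polynomials Q_0 = 1, Q_1(x) = x-3, Q_{n+1}(x) = (x-3)Q_n(x) - Q_{n-1}(x). -/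
open Polynomial

/-- The `n × n` tridiagonal matrix with diagonal entries `e 0, …, e (n-1)` and
sub- and super-diagonal entries equal to `1`. -/
def triM (e : ℕ → ℤ) (n : ℕ) : Matrix (Fin n) (Fin n) ℝ :=
  Matrix.of fun i j =>
    if (i : ℕ) = (j : ℕ) then (e i : ℝ)
    else if (i : ℕ) + 1 = (j : ℕ) ∨ (j : ℕ) + 1 = (i : ℕ) then 1 else 0

open Matrix

variable {R : Type*} [CommRing R]

def triT (d : ℕ → R) (a b : R) (n : ℕ) : Matrix (Fin n) (Fin n) R :=
  Matrix.of fun i j =>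
    if (i : ℕ) = (j : ℕ) then d i
    else if (i : ℕ) + 1 = (j : ℕ) then a
    else if (j : ℕ) + 1 = (i : ℕ) then b else 0

lemma triT_sub (d : ℕ → R) (a b : R) (m : ℕ) :
    ((triT d a b (m+1)).submatrix Fin.castSucc Fin.castSucc) = triT d a b m := by
  ext i j
  simp [triT, Matrix.submatrix_apply]

lemma triT_detB0 (d : ℕ → R) (a b : R) (n : ℕ) :
    ((triT d a b (n+2)).submatrix Fin.castSucc
      ((Fin.castSucc (Fin.last n)).succAbove)).det = a * (triT d a b n).det := by
  set A := triT d a b (n+2) with hA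
  set p : Fin (n+2) := Fin.castSucc (Fin.last n) with hp
  set B := A.submatrix Fin.castSucc p.succAbove with hB
  have hplast : p.succAbove (Fin.last n) = Fin.last (n+1) := by
    rw [Fin.succAbove_of_le_castSucc _ _ (le_refl _), Fin.succ_last]
  rw [Matrix.det_succ_column B (Fin.last n), Fin.sum_univ_castSucc]
  have h0 : ∀ i : Fin n,
      (-1:R) ^ (((i.castSucc : Fin (n+1)) : ℕ) + ((Fin.last n : Fin (n+1)) : ℕ)) *
        B i.castSucc (Fin.last n) *
        (B.submatrix (i.castSucc).succAbove (Fin.last n).succAbove).det = 0 := by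
    intro i
    have : B i.castSucc (Fin.last n) = 0 := by
      rw [hB, Matrix.submatrix_apply, hplast]
      have hi : (i : ℕ) < n := i.isLt
      simp only [hA, triT, Matrix.of_apply, Fin.val_last, Fin.coe_castSucc]
      rw [if_neg (by omega), if_neg (by omega), if_neg (by omega)]
    rw [this, mul_zero, zero_mul]
  rw [Finset.sum_eq_zero fun i _ => h0 i, zero_add]
  have hBll : B (Fin.last n) (Fin.last n) = a := by
    rw [hB, Matrix.submatrix_apply, hplast]
    have h1 : (((Fin.last n).castSucc : Fin (n+2)) : ℕ) = n := by simp
    have h2 : ((Fin.last (n+1) : Fin (n+2)) : ℕ) = n+1 := by simp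
    simp only [hA, triT, Matrix.of_apply]
    rw [if_neg (by omega), if_pos (by omega)]
  have hminor : B.submatrix (Fin.last n).succAbove (Fin.last n).succAbove = triT d a b n := by
    ext i j
    rw [Matrix.submatrix_apply, Fin.succAbove_last, hB, Matrix.submatrix_apply]
    have : p.succAbove j.castSucc = j.castSucc.castSucc := by
      refine Fin.succAbove_of_castSucc_lt _ _ ?_
      simp [Fin.lt_def, hp, j.isLt]
    rw [this]
    simp [hA, triT]
  rw [hBll, hminor]
  have : (-1:R) ^ (((Fin.last n : Fin (n+1)) : ℕ) + ((Fin.last n : Fin (n+1)) : ℕ)) = 1 := by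
    simp only [Fin.val_last]
    rw [← two_mul, pow_mul]
    simp
  rw [this, one_mul]

lemma triT_det_rec (d : ℕ → R) (a b : R) (n : ℕ) :
    (triT d a b (n+2)).det =
      d (n+1) * (triT d a b (n+1)).det - a * b * (triT d a b n).det := by
  set A := triT d a b (n+2) with hA
  rw [Matrix.det_succ_row A (Fin.last (n+1))]
  rw [Fin.sum_univ_castSucc, Fin.sum_univ_castSucc]
  have h0 : ∀ j : Fin n,
      (-1:R) ^ ((Fin.last (n+1) : ℕ) + ((j.castSucc.castSucc : Fin (n+2)) : ℕ)) *
        A (Fin.last (n+1)) j.castSucc.castSucc *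
        (A.submatrix (Fin.last (n+1)).succAbove (j.castSucc.castSucc).succAbove).det = 0 := by
    intro j
    have : A (Fin.last (n+1)) j.castSucc.castSucc = 0 := by
      have hj : (j : ℕ) < n := j.isLt
      simp only [hA, triT, Matrix.of_apply, Fin.val_last, Fin.coe_castSucc]
      rw [if_neg (by omega), if_neg (by omega), if_neg (by omega)]
    rw [this, mul_zero, zero_mul]
  rw [Finset.sum_eq_zero fun j _ => h0 j, zero_add]
  rw [Fin.succAbove_last]
  have e1 : A (Fin.last (n+1)) ((Fin.last n).castSucc) = b := by
    have h1 : (((Fin.last n).castSucc : Fin (n+2)) : ℕ) = n := by simp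
    simp only [hA, triT, Matrix.of_apply, Fin.val_last]
    rw [if_neg (by omega), if_neg (by omega), if_pos (by omega)]
  have e2 : A (Fin.last (n+1)) (Fin.last (n+1)) = d (n+1) := by
    simp [hA, triT]
  have e3 : (A.submatrix Fin.castSucc ((Fin.last n).castSucc).succAbove).det
      = a * (triT d a b n).det := triT_detB0 d a b n
  have e4 : A.submatrix Fin.castSucc Fin.castSucc = triT d a b (n+1) :=
    triT_sub d a b (n+1)
  rw [e1, e2, e3, e4]
  have s1 : (-1:R) ^ ((Fin.last (n+1) : ℕ) + (((Fin.last n).castSucc : Fin (n+2)) : ℕ))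
      = -1 := by
    have : ((Fin.last (n+1) : ℕ) + (((Fin.last n).castSucc : Fin (n+2)) : ℕ)) = 2*n+1 := by
      simp; omega
    rw [this, pow_succ, pow_mul]; simp
  have s2 : (-1:R) ^ ((Fin.last (n+1) : ℕ) + ((Fin.last (n+1) : Fin (n+2)) : ℕ)) = 1 := by
    have : ((Fin.last (n+1) : ℕ) + ((Fin.last (n+1) : Fin (n+2)) : ℕ)) = 2*(n+1) := by
      simp; omega
    rw [this, pow_mul]; simp
  rw [s1, s2]
  ring


lemma charmatrix_triM (e : ℕ → ℤ) (n : ℕ) :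
    charmatrix (triM e n) = triT (fun k => X - C (e k : ℝ)) (-1) (-1) n := by
  ext i j
  by_cases h : i = j
  · subst h
    rw [charmatrix_apply_eq]
    simp [triM, triT]
  · have hv : (i : ℕ) ≠ (j : ℕ) := fun hc => h (Fin.ext hc)
    rw [charmatrix_apply_ne _ _ _ h]
    by_cases h1 : (i : ℕ) + 1 = (j : ℕ)
    · simp [triM, triT, hv, h1]
    · by_cases h2 : (j : ℕ) + 1 = (i : ℕ) <;> simp [triM, triT, hv, h1, h2]

lemma charpoly_triM_zero (e : ℕ → ℤ) : (triM e 0).charpoly = 1 := by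
  simp [Matrix.charpoly]

lemma charpoly_triM_one (e : ℕ → ℤ) : (triM e 1).charpoly = X - C (e 0 : ℝ) := by
  rw [Matrix.charpoly, charmatrix_triM, Matrix.det_fin_one]
  simp [triT]

lemma charpoly_triM_rec (e : ℕ → ℤ) (n : ℕ) :
    (triM e (n+2)).charpoly =
      (X - C ((e (n+1) : ℤ) : ℝ)) * (triM e (n+1)).charpoly - (triM e n).charpoly := by
  rw [Matrix.charpoly, Matrix.charpoly, Matrix.charpoly, charmatrix_triM, charmatrix_triM,
    charmatrix_triM, triT_det_rec]
  ring

lemma fibQ_rec (m : ℕ) : fibQ (m+2) = (X - 3) * fibQ (m+1) - fibQ m := rfl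

theorem stmt17 (e : ℕ → ℤ) (n : ℕ) :
    (triM e n).charpoly =
      fibQ n + ∑ k ∈ Finset.range n,
        C ((3 : ℝ) - (e k : ℝ)) * (triM e k).charpoly * fibQ (n - k - 1) := by
  induction n using Nat.twoStepInduction with
  | zero => simp [charpoly_triM_zero, fibQ]
  | one =>
    rw [charpoly_triM_one]
    simp only [Finset.sum_range_one, charpoly_triM_zero]
    show X - C ((e 0 : ℝ)) = (X - 3) + C ((3:ℝ) - (e 0 : ℝ)) * 1 * (1 : Polynomial ℝ)
    rw [map_sub]
    have h3 : (C (3:ℝ)) = 3 := map_ofNat C 3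
    rw [h3]; ring
  | more n ih1 ih2 =>
    have hC : (X - C ((e (n+1) : ℝ))) = (X - 3) + C ((3:ℝ) - (e (n+1) : ℝ)) := by
      rw [map_sub]
      have h3 : (C (3:ℝ)) = 3 := map_ofNat C 3
      rw [h3]; ring
    have key : (∑ k ∈ Finset.range (n+2),
          C ((3 : ℝ) - (e k : ℝ)) * (triM e k).charpoly * fibQ (n + 2 - k - 1))
        = ((X - 3) * ∑ k ∈ Finset.range (n+1),
            C ((3 : ℝ) - (e k : ℝ)) * (triM e k).charpoly * fibQ (n + 1 - k - 1))
          - (∑ k ∈ Finset.range n,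
            C ((3 : ℝ) - (e k : ℝ)) * (triM e k).charpoly * fibQ (n - k - 1))
          + C ((3 : ℝ) - (e (n+1) : ℝ)) * (triM e (n+1)).charpoly := by
      rw [Finset.sum_range_succ]
      rw [Finset.sum_range_succ]
      rw [Finset.sum_range_succ]
      have h1 : (∑ k ∈ Finset.range n,
            C ((3 : ℝ) - (e k : ℝ)) * (triM e k).charpoly * fibQ (n + 2 - k - 1))
          = ∑ k ∈ Finset.range n,
            ((X - 3) * (C ((3 : ℝ) - (e k : ℝ)) * (triM e k).charpoly * fibQ (n + 1 - k - 1))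
              - C ((3 : ℝ) - (e k : ℝ)) * (triM e k).charpoly * fibQ (n - k - 1)) := by
        refine Finset.sum_congr rfl fun k hk => ?_
        have hk' : k < n := Finset.mem_range.mp hk
        have e1 : n + 1 - k - 1 = (n - k - 1) + 1 := by omega
        have e2 : n + 2 - k - 1 = (n - k - 1) + 2 := by omega
        rw [e1, e2, fibQ_rec]
        ring
      rw [h1, Finset.sum_sub_distrib, ← Finset.mul_sum]
      have e1 : n + 1 - n - 1 = 0 := by omega
      have e2 : n + 2 - n - 1 = 1 := by omega
      have e3 : n + 2 - (n+1) - 1 = 0 := by omega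
      rw [e1, e2, e3]
      rw [show (fibQ 0 : Polynomial ℝ) = 1 from rfl,
        show (fibQ 1 : Polynomial ℝ) = X - 3 from rfl]
      ring
    rw [charpoly_triM_rec, key, ih2, ih1, fibQ_rec n, hC]
    ring
end
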